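/- Let L > 0 and let h_n : [0,L] → [0,∞) be integrable functions converging in L¹([0,L]) to an integrable function h : [0,L] → [0,∞) with ∫₀^L h dx > 0. Then for every sequence λ_n > 0 with λ_n → 0 there exist a constant μ > 0 and an integer N such that for every n ≥ N, |H_{λ_n}| + (1/λ_n) ∫_{[0,L] \ H_{λ_n}} h_n(x) dx > μ, where H_{λ_n} := {x ∈ [0,L] : h_n(x) ≥ λ_n} and |·| denotes Lebesgue measure. -/

import Mathlib

open MeasureTheory Filter

/-- Let `h_n : [0,L] → [0,∞)` be integrable functions converging in `L¹([0,L])` to an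
integrable `h : [0,L] → [0,∞)` with `∫₀^L h dx > 0`.  Then for every sequence `λ_n > 0`
with `λ_n → 0` there exist `μ > 0` and `N` such that for every `n ≥ N`,
`|H_{λ_n}| + (1/λ_n) ∫_{[0,L] \ H_{λ_n}} h_n(x) dx > μ`,
where `H_{λ_n} = {x ∈ [0,L] : h_n(x) ≥ λ_n}`. -/
theorem stmt5 (L : ℝ) (hL : 0 < L) (hn : ℕ → ℝ → ℝ) (h : ℝ → ℝ)
    (hmeas : ∀ n, Measurable (hn n))
    (hint : ∀ n, IntegrableOn (hn n) (Set.Icc 0 L))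
    (hnonneg : ∀ n, ∀ x ∈ Set.Icc (0 : ℝ) L, 0 ≤ hn n x)
    (hhint : IntegrableOn h (Set.Icc 0 L))
    (hhnonneg : ∀ x ∈ Set.Icc (0 : ℝ) L, 0 ≤ h x)
    (hconv : Tendsto (fun n => ∫ x in Set.Icc (0 : ℝ) L, |hn n x - h x|) atTop (nhds 0))
    (hpos : 0 < ∫ x in Set.Icc (0 : ℝ) L, h x)
    (lam : ℕ → ℝ) (hlam : ∀ n, 0 < lam n) (hlam0 : Tendsto lam atTop (nhds 0)) :
    ∃ μ : ℝ, 0 < μ ∧ ∃ N : ℕ, ∀ n ≥ N,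
      μ < (volume {x ∈ Set.Icc (0 : ℝ) L | lam n ≤ hn n x}).toReal
            + (1 / lam n) *
              ∫ x in Set.Icc (0 : ℝ) L \ {x ∈ Set.Icc (0 : ℝ) L | lam n ≤ hn n x}, hn n x := by
  set μ' := volume.restrict (Set.Icc (0 : ℝ) L) with hμ'
  -- nonnegativity a.e.
  have hae : 0 ≤ᵐ[μ'] h := by
    filter_upwards [ae_restrict_mem measurableSet_Icc] with x hx using hhnonneg x hx
  -- positive measure level set
  have hsupp : 0 < μ' (Function.support h) :=
    (integral_pos_iff_support_of_nonneg_ae hae hhint).mp hpos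
  have hlevel : ∃ δ : ℝ, 0 < δ ∧ 0 < volume {x ∈ Set.Icc (0 : ℝ) L | δ ≤ h x} := by
    by_contra hcon
    push_neg at hcon
    have hz : ∀ k : ℕ, volume {x ∈ Set.Icc (0 : ℝ) L | (1 : ℝ)/(k+1) ≤ h x} = 0 := by
      intro k
      have := hcon ((1 : ℝ)/(k+1)) (by positivity)
      exact le_antisymm this zero_le
    have hsub : Function.support h ∩ Set.Icc (0 : ℝ) L ⊆
        ⋃ k : ℕ, {x ∈ Set.Icc (0 : ℝ) L | (1 : ℝ)/(k+1) ≤ h x} := by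
      rintro x ⟨hx1, hx2⟩
      have hx3 : 0 < h x := lt_of_le_of_ne (hhnonneg x hx2) (Ne.symm hx1)
      obtain ⟨k, hk⟩ := exists_nat_one_div_lt hx3
      exact Set.mem_iUnion.2 ⟨k, hx2, hk.le⟩
    have : μ' (Function.support h) = 0 := by
      rw [hμ', Measure.restrict_apply' measurableSet_Icc]
      exact measure_mono_null hsub (measure_iUnion_null hz)
    exact absurd this hsupp.ne'
  obtain ⟨δ, hδ, hA⟩ := hlevel
  set A := {x ∈ Set.Icc (0 : ℝ) L | δ ≤ h x} with hAdef
  have hAsub : A ⊆ Set.Icc (0 : ℝ) L := fun x hx => hx.1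
  have hAfin : volume A ≠ ⊤ :=
    ne_top_of_le_ne_top (by simp [Real.volume_Icc]) (measure_mono hAsub)
  set a := (volume A).toReal with hadef
  have ha : 0 < a := ENNReal.toReal_pos hA.ne' hAfin
  refine ⟨a/4, by positivity, ?_⟩
  -- eventually statements
  have ev1 : ∀ᶠ n in atTop, lam n < δ/2 := hlam0.eventually (gt_mem_nhds (by positivity))
  have ev2 : ∀ᶠ n in atTop, (∫ x in Set.Icc (0 : ℝ) L, |hn n x - h x|) < δ * a / 4 :=
    hconv.eventually (gt_mem_nhds (by positivity))
  obtain ⟨N, hN⟩ := (ev1.and ev2).exists_forall_of_atTop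
  refine ⟨N, fun n hnN => ?_⟩
  obtain ⟨hlam2, hint2⟩ := hN n hnN
  set H := {x ∈ Set.Icc (0 : ℝ) L | lam n ≤ hn n x} with hHdef
  have hHfin : volume H ≠ ⊤ :=
    ne_top_of_le_ne_top (by simp [Real.volume_Icc]) (measure_mono (fun x hx => hx.1))
  -- Chebyshev
  have hfint : Integrable (fun x => |hn n x - h x|) μ' := ((hint n).sub hhint).abs
  have hcheb := mul_meas_ge_le_integral_of_nonneg
    (ae_of_all μ' (fun x => abs_nonneg _)) hfint (δ/2)
  -- A \ H is in the Chebyshev set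
  have hsub2 : A \ H ⊆ {x | δ/2 ≤ |hn n x - h x|} ∩ Set.Icc (0 : ℝ) L := by
    rintro x ⟨hxA, hxH⟩
    refine ⟨?_, hxA.1⟩
    have h1 : hn n x < lam n := by
      by_contra hc
      exact hxH ⟨hxA.1, not_lt.mp hc⟩
    have h2 : δ ≤ h x := hxA.2
    have : δ/2 ≤ h x - hn n x := by linarith
    calc δ/2 ≤ h x - hn n x := this
      _ ≤ |h x - hn n x| := le_abs_self _
      _ = |hn n x - h x| := abs_sub_comm _ _
  have hmono : volume (A \ H) ≤ μ' {x | δ/2 ≤ |hn n x - h x|} := by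
    rw [hμ', Measure.restrict_apply' measurableSet_Icc]
    exact measure_mono hsub2
  have hBfin : μ' {x | δ/2 ≤ |hn n x - h x|} ≠ ⊤ := by
    refine ne_top_of_le_ne_top (show volume (Set.Icc (0:ℝ) L) ≠ ⊤ by simp [Real.volume_Icc]) ?_
    rw [hμ', Measure.restrict_apply' measurableSet_Icc]
    exact measure_mono Set.inter_subset_right
  have hdiff : (volume (A \ H)).toReal < a / 2 := by
    have h1 : (volume (A \ H)).toReal ≤ (μ' {x | δ/2 ≤ |hn n x - h x|}).toReal :=
      ENNReal.toReal_mono hBfin hmono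
    rw [measureReal_def] at hcheb
    nlinarith [hcheb, hint2, h1]
  -- lower bound on |H|
  have hsplit : volume A ≤ volume (A ∩ H) + volume (A \ H) :=
    measure_le_inter_add_diff volume A H
  have hAHfin : volume (A ∩ H) ≠ ⊤ :=
    ne_top_of_le_ne_top hAfin (measure_mono Set.inter_subset_left)
  have hADfin : volume (A \ H) ≠ ⊤ :=
    ne_top_of_le_ne_top hAfin (measure_mono Set.diff_subset)
  have hsplit' : a ≤ (volume (A ∩ H)).toReal + (volume (A \ H)).toReal := by
    rw [hadef, ← ENNReal.toReal_add hAHfin hADfin]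
    exact ENNReal.toReal_mono (by simp [hAHfin, hADfin, ENNReal.add_ne_top]) hsplit
  have hHlb : a / 2 < (volume H).toReal := by
    have h1 : (volume (A ∩ H)).toReal ≤ (volume H).toReal :=
      ENNReal.toReal_mono hHfin (measure_mono Set.inter_subset_right)
    linarith
  -- second term nonneg
  have hterm2 : 0 ≤ (1 / lam n) * ∫ x in Set.Icc (0 : ℝ) L \ H, hn n x := by
    have hHm : MeasurableSet H := measurableSet_Icc.inter ((hmeas n) measurableSet_Ici)
    have : 0 ≤ ∫ x in Set.Icc (0 : ℝ) L \ H, hn n x :=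
      setIntegral_nonneg (measurableSet_Icc.diff hHm) (fun x hx => hnonneg n x hx.1)
    exact mul_nonneg (one_div_nonneg.mpr (hlam n).le) this
  linarith
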